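/- Choose an (n,k,r,s)-graph uniformly at random (i.e., for each r-set of parts, choose uniformly at random a perfect-matching-like set of s disjoint edges among them). The expected number of independent transversals equals k^n·(1 - s/k^r)^{C(n,r)}. Consequently, if k^n·(1 - s/k^r)^{C(n,r)} < 1, then there exists an (n,k,r,s)-graph with no independent transversal, so f(k,r,s) < n. -/

import Mathlib

open Finset

namespace Stmt9
open Classical

variable {n k : ℕ}

noncomputable def graphOf (f : Fin n → Fin k) : Finset (Fin n × Fin k) :=
  Finset.univ.image (fun i => (i, f i))

lemma mem_graphOf {f : Fin n → Fin k} {v : Fin n × Fin k} :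
    v ∈ graphOf f ↔ v.2 = f v.1 := by
  obtain ⟨a, b⟩ := v
  simp only [graphOf, Finset.mem_image, Finset.mem_univ, true_and, Prod.mk.injEq]
  constructor
  · rintro ⟨i, rfl, rfl⟩; rfl
  · rintro rfl; exact ⟨a, rfl, rfl⟩

lemma subset_graphOf {f : Fin n → Fin k} {e : Finset (Fin n × Fin k)} :
    e ⊆ graphOf f ↔ ∀ v ∈ e, v.2 = f v.1 := by
  constructor
  · intro h v hv; exact mem_graphOf.1 (h hv)
  · intro h v hv; exact mem_graphOf.2 (h v hv)

lemma col_unique {e : Finset (Fin n × Fin k)}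
    (he : ∀ i : Fin n, (e.filter (fun v => v.1 = i)).card ≤ 1)
    {v w : Fin n × Fin k} (hv : v ∈ e) (hw : w ∈ e) (h1 : v.1 = w.1) : v = w := by
  have hv' : v ∈ e.filter (fun x => x.1 = w.1) := mem_filter.2 ⟨hv, h1⟩
  have hw' : w ∈ e.filter (fun x => x.1 = w.1) := mem_filter.2 ⟨hw, rfl⟩
  exact Finset.card_le_one.mp (he w.1) v hv' w hw'

lemma support_card {r : ℕ} {e : Finset (Fin n × Fin k)} (hc : e.card = r)
    (he : ∀ i : Fin n, (e.filter (fun v => v.1 = i)).card ≤ 1) :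
    (e.image Prod.fst).card = r := by
  rw [Finset.card_image_of_injOn, hc]
  intro v hv w hw h1
  exact col_unique he hv hw h1

lemma support_eq {r : ℕ} {e : Finset (Fin n × Fin k)} {A : Finset (Fin n)}
    (hA : A.card = r) (hc : e.card = r)
    (he : ∀ i : Fin n, (e.filter (fun v => v.1 = i)).card ≤ 1)
    (hsub : ∀ v ∈ e, v.1 ∈ A) :
    e.image Prod.fst = A := by
  apply Finset.eq_of_subset_of_card_le
  · intro i hi
    obtain ⟨v, hv, rfl⟩ := mem_image.1 hi
    exact hsub v hv
  · rw [hA, support_card hc he]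


lemma card_ext {r : ℕ} {e : Finset (Fin n × Fin k)} (hc : e.card = r)
    (he : ∀ i : Fin n, (e.filter (fun v => v.1 = i)).card ≤ 1) :
    (Finset.univ.filter (fun t : Fin n → Fin k => e ⊆ graphOf t)).card = k ^ (n - r) := by
  classical
  set D : Fin n → Finset (Fin k) := fun i =>
    if i ∈ e.image Prod.fst then (e.filter (fun v => v.1 = i)).image Prod.snd else Finset.univ
    with hD
  have hset : Finset.univ.filter (fun t : Fin n → Fin k => e ⊆ graphOf t)
      = Fintype.piFinset D := by
    ext t
    simp only [Finset.mem_filter, Finset.mem_univ, true_and, Fintype.mem_piFinset,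
      subset_graphOf, hD]
    constructor
    · intro h i
      by_cases hi : i ∈ e.image Prod.fst
      · simp only [hi, if_pos]
        obtain ⟨v, hv, rfl⟩ := mem_image.1 hi
        exact mem_image.2 ⟨v, mem_filter.2 ⟨hv, rfl⟩, h v hv⟩
      · simp [hi]
    · intro h v hv
      have hi : v.1 ∈ e.image Prod.fst := mem_image.2 ⟨v, hv, rfl⟩
      have := h v.1
      rw [if_pos hi] at this
      obtain ⟨w, hw, hw2⟩ := mem_image.1 this
      have hw' := mem_filter.1 hw
      have : w = v := col_unique he hw'.1 hv hw'.2
      rw [← hw2, this]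
  rw [hset, Fintype.card_piFinset]
  have hcard : ∀ i : Fin n, (D i).card = if i ∈ e.image Prod.fst then 1 else k := by
    intro i
    by_cases hi : i ∈ e.image Prod.fst
    · simp only [hD, hi, if_pos]
      refine Finset.card_eq_one.2 ?_
      obtain ⟨v, hv, rfl⟩ := mem_image.1 hi
      refine ⟨v.2, ?_⟩
      apply Finset.eq_singleton_iff_unique_mem.2
      refine ⟨mem_image.2 ⟨v, mem_filter.2 ⟨hv, rfl⟩, rfl⟩, ?_⟩
      intro c hcmem
      obtain ⟨w, hw, rfl⟩ := mem_image.1 hcmem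
      have hw' := mem_filter.1 hw
      rw [col_unique he hw'.1 hv hw'.2]
    · simp only [hD]
      rw [if_neg hi, if_neg hi, Finset.card_univ, Fintype.card_fin]
  calc (∏ i : Fin n, (D i).card)
      = ∏ i : Fin n, (if i ∈ e.image Prod.fst then 1 else k) := by
        exact Finset.prod_congr rfl (fun i _ => hcard i)
    _ = (∏ i ∈ e.image Prod.fst, (if i ∈ e.image Prod.fst then 1 else k)) *
        ∏ i ∈ (e.image Prod.fst)ᶜ, (if i ∈ e.image Prod.fst then 1 else k) :=
        (Finset.prod_mul_prod_compl _ _).symm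
    _ = 1 * k ^ (n - r) := by
        congr 1
        · exact Finset.prod_eq_one (fun i hi => by rw [if_pos hi])
        · rw [Finset.prod_congr rfl (fun i hi => by
            rw [if_neg (Finset.mem_compl.1 hi)]), Finset.prod_const,
            Finset.card_compl, support_card hc he, Fintype.card_fin]
    _ = k ^ (n - r) := one_mul _


def IsMatching (r s : ℕ) (A : Finset (Fin n)) (m : Finset (Finset (Fin n × Fin k))) : Prop :=
  (∀ e ∈ m, e.card = r ∧ (∀ i : Fin n, (e.filter (fun v => v.1 = i)).card ≤ 1) ∧
    ∀ v ∈ e, v.1 ∈ A) ∧ m.card = s ∧ ∀ e ∈ m, ∀ e' ∈ m, e ≠ e' → Disjoint e e'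

noncomputable def Matchings (r s : ℕ) (A : Finset (Fin n)) :
    Finset (Finset (Finset (Fin n × Fin k))) :=
  Finset.univ.filter (IsMatching r s A)

lemma mem_Matchings {r s : ℕ} {A : Finset (Fin n)} {m : Finset (Finset (Fin n × Fin k))} :
    m ∈ Matchings r s A ↔ IsMatching r s A m := by
  simp [Matchings]

/-- number of transversals avoiding a fixed matching -/
lemma card_avoid {r s : ℕ} {A : Finset (Fin n)} (hA : A.card = r) (hr : 1 ≤ r)
    {m : Finset (Finset (Fin n × Fin k))} (hm : IsMatching r s A m) :
    (Finset.univ.filter (fun t : Fin n → Fin k =>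
      ∀ e ∈ m, ¬ e ⊆ graphOf t)).card = k ^ n - s * k ^ (n - r) := by
  classical
  obtain ⟨hedge, hcard, hdisj⟩ := hm
  have hhit : (Finset.univ.filter (fun t : Fin n → Fin k =>
      ¬ ∀ e ∈ m, ¬ e ⊆ graphOf t)).card = s * k ^ (n - r) := by
    have hbu : Finset.univ.filter (fun t : Fin n → Fin k =>
        ¬ ∀ e ∈ m, ¬ e ⊆ graphOf t)
        = m.biUnion (fun e => Finset.univ.filter (fun t => e ⊆ graphOf t)) := by
      ext t
      simp only [Finset.mem_filter, Finset.mem_univ, true_and, Finset.mem_biUnion]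
      push_neg
      tauto
    rw [hbu, Finset.card_biUnion]
    · rw [Finset.sum_congr rfl (fun e hee =>
        card_ext (hedge e hee).1 (hedge e hee).2.1), Finset.sum_const, hcard, smul_eq_mul]
    · intro e hee e' hee' hne
      rw [Function.onFun, Finset.disjoint_left]
      intro t ht ht'
      have h1 : e ⊆ graphOf t := (mem_filter.1 ht).2
      have h2 : e' ⊆ graphOf t := (mem_filter.1 ht').2
      -- e nonempty
      obtain ⟨v, hv⟩ := Finset.card_pos.1 (by rw [(hedge e hee).1]; exact hr)
      -- e' has a vertex in column v.1
      have hsupp : e'.image Prod.fst = A :=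
        support_eq hA (hedge e' hee').1 (hedge e' hee').2.1 (hedge e' hee').2.2
      have hvA : v.1 ∈ A := (hedge e hee).2.2 v hv
      rw [← hsupp] at hvA
      obtain ⟨w, hw, hw1⟩ := mem_image.1 hvA
      have : v = w := by
        have hv2 := subset_graphOf.1 h1 v hv
        have hw2 := subset_graphOf.1 h2 w hw
        have : v.2 = w.2 := by rw [hv2, hw2, hw1]
        exact Prod.ext hw1.symm this
      exact (Finset.disjoint_left.1 (hdisj e hee e' hee' hne)) hv (this ▸ hw)
  have htot := Finset.card_filter_add_card_filter_not
    (s := (Finset.univ : Finset (Fin n → Fin k)))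
    (p := fun t => ∀ e ∈ m, ¬ e ⊆ graphOf t)
  rw [hhit, Finset.card_univ] at htot
  have hcardfun : Fintype.card (Fin n → Fin k) = k ^ n := by
    rw [Fintype.card_fun, Fintype.card_fin, Fintype.card_fin]
  omega


noncomputable def sw (f g : Fin n → Fin k) : Fin n × Fin k → Fin n × Fin k :=
  fun v => (v.1, Equiv.swap (f v.1) (g v.1) v.2)

lemma sw_invol (f g : Fin n → Fin k) : Function.Involutive (sw f g) := by
  intro v
  simp [sw, Equiv.swap_apply_self]

lemma sw_symm (f g : Fin n → Fin k) : sw f g = sw g f := by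
  funext v
  simp [sw, Equiv.swap_comm]

lemma sw_inj (f g : Fin n → Fin k) : Function.Injective (sw f g) :=
  (sw_invol f g).injective

lemma sw_graph {f g : Fin n → Fin k} {v : Fin n × Fin k} :
    sw f g v ∈ graphOf g ↔ v ∈ graphOf f := by
  rw [mem_graphOf, mem_graphOf]
  simp only [sw]
  rw [Equiv.swap_apply_eq_iff, Equiv.swap_apply_right]

/-- the image of a matching under the swap map, preserving membership/avoidance -/
lemma sw_matching {r s : ℕ} {A : Finset (Fin n)} (f g : Fin n → Fin k)
    {m : Finset (Finset (Fin n × Fin k))}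
    (hm : m ∈ (Matchings r s A).filter (fun m => ∀ e ∈ m, ¬ e ⊆ graphOf f)) :
    m.image (fun e => e.image (sw f g)) ∈
      (Matchings r s A).filter (fun m => ∀ e ∈ m, ¬ e ⊆ graphOf g) := by
  classical
  rw [Finset.mem_filter, mem_Matchings] at hm ⊢
  obtain ⟨⟨hedge, hcard, hdisj⟩, havoid⟩ := hm
  have hsub : ∀ (e : Finset (Fin n × Fin k)), e ⊆ graphOf f ↔ e.image (sw f g) ⊆ graphOf g := by
    intro e
    constructor
    · intro h v hv
      obtain ⟨w, hw, rfl⟩ := mem_image.1 hv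
      exact sw_graph.2 (h hw)
    · intro h v hv
      exact sw_graph.1 (h (mem_image.2 ⟨v, hv, rfl⟩))
  refine ⟨⟨?_, ?_, ?_⟩, ?_⟩
  · intro e' he'
    obtain ⟨e, he, rfl⟩ := mem_image.1 he'
    obtain ⟨hc, hcol, hA⟩ := hedge e he
    refine ⟨by rw [Finset.card_image_of_injective _ (sw_inj f g), hc], ?_, ?_⟩
    · intro i
      have : (e.image (sw f g)).filter (fun v => v.1 = i)
          = (e.filter (fun v => v.1 = i)).image (sw f g) := by
        ext v
        simp only [Finset.mem_filter, Finset.mem_image]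
        constructor
        · rintro ⟨⟨w, hw, rfl⟩, h1⟩
          exact ⟨w, ⟨hw, h1⟩, rfl⟩
        · rintro ⟨w, ⟨hw1, hw2⟩, rfl⟩
          exact ⟨⟨w, hw1, rfl⟩, hw2⟩
      rw [this, Finset.card_image_of_injective _ (sw_inj f g)]
      exact hcol i
    · intro v hv
      obtain ⟨w, hw, rfl⟩ := mem_image.1 hv
      exact hA w hw
  · rw [Finset.card_image_of_injective _ (Finset.image_injective (sw_inj f g)), hcard]
  · intro e1 he1 e2 he2 hne
    obtain ⟨d1, hd1, rfl⟩ := mem_image.1 he1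
    obtain ⟨d2, hd2, rfl⟩ := mem_image.1 he2
    have hdne : d1 ≠ d2 := fun h => hne (by rw [h])
    rw [Finset.disjoint_image (sw_inj f g)]
    exact hdisj d1 hd1 d2 hd2 hdne
  · intro e' he'
    obtain ⟨e, he, rfl⟩ := mem_image.1 he'
    exact fun h => havoid e he ((hsub e).2 h)

lemma card_avoid_const {r s : ℕ} {A : Finset (Fin n)} (f g : Fin n → Fin k) :
    ((Matchings r s A).filter (fun m => ∀ e ∈ m, ¬ e ⊆ graphOf f)).card
      = ((Matchings r s A).filter (fun m => ∀ e ∈ m, ¬ e ⊆ graphOf g)).card := by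
  classical
  apply Finset.card_nbij' (fun m => m.image (fun e => e.image (sw f g)))
    (fun m => m.image (fun e => e.image (sw f g)))
  · intro m hm; exact sw_matching f g hm
  · intro m hm; rw [sw_symm]; exact sw_matching g f hm
  · intro m _
    beta_reduce
    rw [Finset.image_image]
    have : ((fun e => Finset.image (sw f g) e) ∘ fun e => Finset.image (sw f g) e)
        = id := by
      funext e
      simp only [Function.comp, id]
      rw [Finset.image_image]
      have : sw f g ∘ sw f g = id := funext (sw_invol f g)
      rw [this, Finset.image_id]
    rw [this, Finset.image_id]
  · intro m _
    beta_reduce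
    rw [Finset.image_image]
    have : ((fun e => Finset.image (sw f g) e) ∘ fun e => Finset.image (sw f g) e)
        = id := by
      funext e
      simp only [Function.comp, id]
      rw [Finset.image_image]
      have : sw f g ∘ sw f g = id := funext (sw_invol f g)
      rw [this, Finset.image_id]
    rw [this, Finset.image_id]


lemma avoid_count_eq {r s : ℕ} {A : Finset (Fin n)} (hA : A.card = r) (hr : 1 ≤ r)
    (hrn : r ≤ n) (hk : 1 ≤ k) (f : Fin n → Fin k) :
    ((Matchings r s A).filter (fun m => ∀ e ∈ m, ¬ e ⊆ graphOf f)).card * k ^ n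
      = (Matchings r s A : Finset (Finset (Finset (Fin n × Fin k)))).card
        * (k ^ n - s * k ^ (n - r)) := by
  classical
  have hsum : ∑ t : Fin n → Fin k,
      ((Matchings (n := n) (k := k) r s A).filter (fun m => ∀ e ∈ m, ¬ e ⊆ graphOf t)).card
      = (Matchings (n := n) (k := k) r s A).card * (k ^ n - s * k ^ (n - r)) := by
    have swap : ∑ t : Fin n → Fin k,
        ((Matchings (n := n) (k := k) r s A).filter
          (fun m => ∀ e ∈ m, ¬ e ⊆ graphOf t)).card
        = ∑ m ∈ Matchings (n := n) (k := k) r s A,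
          (Finset.univ.filter (fun t : Fin n → Fin k => ∀ e ∈ m, ¬ e ⊆ graphOf t)).card := by
      simp only [Finset.card_filter]
      rw [Finset.sum_comm]
    rw [swap]
    rw [Finset.sum_congr rfl (fun m hm => card_avoid hA hr (mem_Matchings.1 hm)),
      Finset.sum_const, smul_eq_mul]
  have hconst : ∑ t : Fin n → Fin k,
      ((Matchings (n := n) (k := k) r s A).filter (fun m => ∀ e ∈ m, ¬ e ⊆ graphOf t)).card
      = k ^ n * ((Matchings (n := n) (k := k) r s A).filter
          (fun m => ∀ e ∈ m, ¬ e ⊆ graphOf f)).card := by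
    rw [Finset.sum_congr rfl (fun t _ => card_avoid_const t f), Finset.sum_const,
      smul_eq_mul, Finset.card_univ, Fintype.card_fun, Fintype.card_fin, Fintype.card_fin]
  rw [hconst, mul_comm] at hsum
  exact hsum

lemma avoid_count_real {r s : ℕ} {A : Finset (Fin n)} (hA : A.card = r) (hr : 1 ≤ r)
    (hrn : r ≤ n) (hk : 1 ≤ k) (hsk : s ≤ k) (f : Fin n → Fin k) :
    (((Matchings (n := n) (k := k) r s A).filter
        (fun m => ∀ e ∈ m, ¬ e ⊆ graphOf f)).card : ℝ)
      = ((Matchings (n := n) (k := k) r s A).card : ℝ)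
          * (1 - (s : ℝ) / (k : ℝ) ^ r) := by
  have hsr : s ≤ k ^ r := le_trans hsk (by
    calc k = k ^ 1 := (pow_one k).symm
      _ ≤ k ^ r := Nat.pow_le_pow_right hk hr)
  have key := avoid_count_eq (s := s) hA hr hrn hk f
  -- rewrite k^n = k^r * k^(n-r)
  have hkn : k ^ n = k ^ r * k ^ (n - r) := by
    rw [← pow_add]
    congr 1
    omega
  have key2 : ((Matchings (n := n) (k := k) r s A).filter
        (fun m => ∀ e ∈ m, ¬ e ⊆ graphOf f)).card * k ^ r
      = (Matchings (n := n) (k := k) r s A).card * (k ^ r - s) := by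
    have hpos : 0 < k ^ (n - r) := Nat.pow_pos hk
    apply Nat.eq_of_mul_eq_mul_right hpos
    calc _ = ((Matchings (n := n) (k := k) r s A).filter
          (fun m => ∀ e ∈ m, ¬ e ⊆ graphOf f)).card * k ^ n := by
            rw [hkn]; ring
      _ = (Matchings (n := n) (k := k) r s A).card * (k ^ n - s * k ^ (n - r)) := key
      _ = _ := by
        rw [hkn, ← Nat.sub_mul, Nat.mul_assoc]
  have hkr : (0 : ℝ) < (k : ℝ) ^ r := by positivity
  have := congrArg (fun x : ℕ => (x : ℝ)) key2
  push_cast [Nat.cast_sub hsr] at this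
  field_simp
  linarith [this]


lemma card_factor (r s : ℕ) (hr : 1 ≤ r)
    (P : Finset (Fin n) → Finset (Finset (Fin n × Fin k)) → Prop)
    [∀ A, DecidablePred (P A)]
    (family : Finset (Finset (Finset (Fin n × Fin k))))
    (hfam : family = Finset.univ.filter (fun H =>
      (∀ e ∈ H, e.card = r) ∧
      (∀ e ∈ H, ∀ i : Fin n, (e.filter (fun v => v.1 = i)).card ≤ 1) ∧
      (∀ A : Finset (Fin n), A.card = r →
        (H.filter (fun e => ∀ v ∈ e, v.1 ∈ A)).card = s ∧
        ∀ e ∈ H, ∀ e' ∈ H, (∀ v ∈ e, v.1 ∈ A) → (∀ v ∈ e', v.1 ∈ A) →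
          e ≠ e' → Disjoint e e'))) :
    (family.filter (fun H => ∀ A ∈ (Finset.univ : Finset (Fin n)).powersetCard r,
        P A (H.filter (fun e => ∀ v ∈ e, v.1 ∈ A)))).card
      = ∏ A ∈ (Finset.univ : Finset (Fin n)).powersetCard r,
        ((Matchings (n := n) (k := k) r s A).filter (P A)).card := by
  classical
  subst hfam
  set pc := (Finset.univ : Finset (Fin n)).powersetCard r with hpc
  rw [← Finset.card_pi]
  apply Finset.card_nbij'
    (fun H => fun A (_ : A ∈ pc) => H.filter (fun e => ∀ v ∈ e, v.1 ∈ A))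
    (fun p => pc.attach.biUnion (fun A => p A.1 A.2))
  · -- forward maps into the pi set
    intro H hH
    rw [Finset.mem_coe, Finset.mem_filter] at hH
    obtain ⟨hHf, hP⟩ := hH
    rw [Finset.mem_filter] at hHf
    obtain ⟨-, h1, h2, h3⟩ := hHf
    rw [Finset.mem_coe, Finset.mem_pi]
    intro A hA
    have hAr : A.card = r := (Finset.mem_powersetCard.1 hA).2
    rw [Finset.mem_filter, mem_Matchings]
    refine ⟨⟨?_, (h3 A hAr).1, ?_⟩, hP A hA⟩
    · intro e he
      have he' := Finset.mem_filter.1 he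
      exact ⟨h1 e he'.1, h2 e he'.1, he'.2⟩
    · intro e he e' he' hne
      have hm := Finset.mem_filter.1 he
      have hm' := Finset.mem_filter.1 he'
      exact (h3 A hAr).2 e hm.1 e' hm'.1 hm.2 hm'.2 hne
  · -- backward maps into the filter set
    intro p hp
    rw [Finset.mem_coe, Finset.mem_pi] at hp
    have hmem : ∀ (A : Finset (Fin n)) (hA : A ∈ pc), IsMatching r s A (p A hA) := by
      intro A hA
      exact mem_Matchings.1 (Finset.mem_filter.1 (hp A hA)).1
    -- key: the A-filter of the union is p A hA
    have hphi : ∀ (A : Finset (Fin n)) (hA : A ∈ pc),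
        (pc.attach.biUnion (fun B => p B.1 B.2)).filter
          (fun e => ∀ v ∈ e, v.1 ∈ A) = p A hA := by
      intro A hA
      have hAr : A.card = r := (Finset.mem_powersetCard.1 hA).2
      ext e
      rw [Finset.mem_filter, Finset.mem_biUnion]
      constructor
      · rintro ⟨⟨B, -, heB⟩, hsub⟩
        obtain ⟨hc, hcol, hsB⟩ := (hmem B.1 B.2).1 e heB
        have hBr : B.1.card = r := (Finset.mem_powersetCard.1 B.2).2
        have hBA : B.1 = A := by
          have h1 : e.image Prod.fst = B.1 := support_eq hBr hc hcol hsB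
          have h2 : e.image Prod.fst ⊆ A := by
            intro i hi
            obtain ⟨v, hv, rfl⟩ := mem_image.1 hi
            exact hsub v hv
          rw [h1] at h2
          exact Finset.eq_of_subset_of_card_le h2 (by rw [hAr, hBr])
        obtain ⟨B, hB⟩ := B
        dsimp at hBA heB
        subst hBA
        exact heB
      · intro he
        refine ⟨⟨⟨A, hA⟩, Finset.mem_attach _ _, he⟩, ?_⟩
        exact ((hmem A hA).1 e he).2.2
    rw [Finset.mem_coe, Finset.mem_filter]
    constructor
    · -- union is in the family
      rw [Finset.mem_filter]
      refine ⟨Finset.mem_univ _, ?_, ?_, ?_⟩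
      · intro e he
        obtain ⟨B, -, heB⟩ := Finset.mem_biUnion.1 he
        exact ((hmem B.1 B.2).1 e heB).1
      · intro e he
        obtain ⟨B, -, heB⟩ := Finset.mem_biUnion.1 he
        exact ((hmem B.1 B.2).1 e heB).2.1
      · intro A hAr
        have hA : A ∈ pc := Finset.mem_powersetCard.2 ⟨Finset.subset_univ _, hAr⟩
        constructor
        · rw [hphi A hA]
          exact (hmem A hA).2.1
        · intro e he e' he' hse hse' hne
          have h1 : e ∈ p A hA := by
            rw [← hphi A hA]
            exact Finset.mem_filter.2 ⟨he, hse⟩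
          have h2 : e' ∈ p A hA := by
            rw [← hphi A hA]
            exact Finset.mem_filter.2 ⟨he', hse'⟩
          exact (hmem A hA).2.2 e h1 e' h2 hne
    · intro A hA
      rw [hphi A hA]
      exact (Finset.mem_filter.1 (hp A hA)).2
  · -- j ∘ i = id
    intro H hH
    rw [Finset.mem_coe, Finset.mem_filter] at hH
    obtain ⟨hHf, -⟩ := hH
    rw [Finset.mem_filter] at hHf
    obtain ⟨-, h1, h2, -⟩ := hHf
    ext e
    rw [Finset.mem_biUnion]
    constructor
    · rintro ⟨B, -, heB⟩
      exact (Finset.mem_filter.1 heB).1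
    · intro he
      have hA : e.image Prod.fst ∈ pc :=
        Finset.mem_powersetCard.2 ⟨Finset.subset_univ _, support_card (h1 e he) (h2 e he)⟩
      refine ⟨⟨e.image Prod.fst, hA⟩, Finset.mem_attach _ _, ?_⟩
      refine Finset.mem_filter.2 ⟨he, ?_⟩
      intro v hv
      exact mem_image.2 ⟨v, hv, rfl⟩
  · -- i ∘ j = id
    intro p hp
    rw [Finset.mem_coe, Finset.mem_pi] at hp
    have hmem : ∀ (A : Finset (Fin n)) (hA : A ∈ pc), IsMatching r s A (p A hA) := by
      intro A hA
      exact mem_Matchings.1 (Finset.mem_filter.1 (hp A hA)).1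
    funext A hA
    -- same as hphi above
    have hAr : A.card = r := (Finset.mem_powersetCard.1 hA).2
    ext e
    rw [Finset.mem_filter, Finset.mem_biUnion]
    constructor
    · rintro ⟨⟨B, -, heB⟩, hsub⟩
      obtain ⟨hc, hcol, hsB⟩ := (hmem B.1 B.2).1 e heB
      have hBr : B.1.card = r := (Finset.mem_powersetCard.1 B.2).2
      have hBA : B.1 = A := by
        have hh1 : e.image Prod.fst = B.1 := support_eq hBr hc hcol hsB
        have hh2 : e.image Prod.fst ⊆ A := by
          intro i hi
          obtain ⟨v, hv, rfl⟩ := mem_image.1 hi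
          exact hsub v hv
        rw [hh1] at hh2
        exact Finset.eq_of_subset_of_card_le hh2 (by rw [hAr, hBr])
      obtain ⟨B, hB⟩ := B
      dsimp at hBA heB
      subst hBA
      exact heB
    · intro he
      refine ⟨⟨⟨A, hA⟩, Finset.mem_attach _ _, he⟩, ?_⟩
      exact ((hmem A hA).1 e he).2.2


lemma matchings_nonempty {r s : ℕ} {A : Finset (Fin n)} (hA : A.card = r) (hr : 1 ≤ r)
    (hsk : s ≤ k) : (Matchings (n := n) (k := k) r s A).Nonempty := by
  classical
  have hAne : A.Nonempty := Finset.card_pos.1 (by omega)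
  obtain ⟨i0, hi0⟩ := hAne
  refine ⟨(Finset.univ : Finset (Fin s)).image
    (fun j => A.image (fun i => (i, Fin.castLE hsk j))), ?_⟩
  rw [mem_Matchings]
  have hedgecard : ∀ c : Fin k, (A.image (fun i => (i, c))).card = r := by
    intro c
    rw [Finset.card_image_of_injective, hA]
    intro a b h
    exact (Prod.ext_iff.1 h).1
  refine ⟨?_, ?_, ?_⟩
  · intro e he
    obtain ⟨j, -, rfl⟩ := mem_image.1 he
    refine ⟨hedgecard _, ?_, ?_⟩
    · intro i
      apply Finset.card_le_one.2
      intro v hv w hw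
      have hv' := mem_filter.1 hv
      have hw' := mem_filter.1 hw
      obtain ⟨a, -, rfl⟩ := mem_image.1 hv'.1
      obtain ⟨b, -, rfl⟩ := mem_image.1 hw'.1
      have ha : a = i := hv'.2
      have hb : b = i := hw'.2
      rw [ha, hb]
    · intro v hv
      obtain ⟨a, ha, rfl⟩ := mem_image.1 hv
      exact ha
  · rw [Finset.card_image_of_injective, Finset.card_univ, Fintype.card_fin]
    intro a b h
    have h' : A.image (fun i => (i, Fin.castLE hsk a))
        = A.image (fun i => (i, Fin.castLE hsk b)) := h
    have hmem0 : (i0, Fin.castLE hsk a) ∈ A.image (fun i => (i, Fin.castLE hsk b)) := by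
      rw [← h']
      exact mem_image.2 ⟨i0, hi0, rfl⟩
    obtain ⟨c, -, hc⟩ := mem_image.1 hmem0
    exact (Fin.castLE_injective hsk (Prod.ext_iff.1 hc).2).symm
  · intro e he e' he' hne
    obtain ⟨j, -, rfl⟩ := mem_image.1 he
    obtain ⟨j', -, rfl⟩ := mem_image.1 he'
    rw [Finset.disjoint_left]
    rintro v hv hv'
    obtain ⟨a, -, rfl⟩ := mem_image.1 hv
    obtain ⟨b, -, hb⟩ := mem_image.1 hv'
    have h2 : j' = j := Fin.castLE_injective hsk (Prod.ext_iff.1 hb).2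
    exact hne (by rw [h2])

end Stmt9

set_option maxHeartbeats 2000000 in
open Classical in
theorem stmt9 (n k r s : ℕ) (hr : 2 ≤ r) (hrn : r ≤ n) (hk : 1 ≤ k) (hs : 1 ≤ s)
    (hsk : s ≤ k)
    (family : Finset (Finset (Finset (Fin n × Fin k))))
    (hfam : family = Finset.univ.filter (fun H =>
      (∀ e ∈ H, e.card = r) ∧
      (∀ e ∈ H, ∀ i : Fin n, (e.filter (fun v => v.1 = i)).card ≤ 1) ∧
      (∀ A : Finset (Fin n), A.card = r →
        (H.filter (fun e => ∀ v ∈ e, v.1 ∈ A)).card = s ∧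
        ∀ e ∈ H, ∀ e' ∈ H, (∀ v ∈ e, v.1 ∈ A) → (∀ v ∈ e', v.1 ∈ A) →
          e ≠ e' → Disjoint e e'))) :
    (∑ H ∈ family, ((Finset.univ.filter (fun f : Fin n → Fin k =>
        ∀ e ∈ H, ¬ e ⊆ Finset.univ.image (fun i => (i, f i)))).card : ℝ))
      = (family.card : ℝ) * (k : ℝ) ^ n * (1 - (s : ℝ) / (k : ℝ) ^ r) ^ (Nat.choose n r) ∧
    ((k : ℝ) ^ n * (1 - (s : ℝ) / (k : ℝ) ^ r) ^ (Nat.choose n r) < 1 →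
      ∃ H ∈ family, ¬ ∃ f : Fin n → Fin k,
        ∀ e ∈ H, ¬ e ⊆ Finset.univ.image (fun i => (i, f i))) := by
  classical
  have hr1 : 1 ≤ r := by omega
  set pc := (Finset.univ : Finset (Fin n)).powersetCard r with hpcdef
  have hpccard : pc.card = Nat.choose n r := by
    rw [hpcdef, Finset.card_powersetCard, Finset.card_univ, Fintype.card_fin]
  -- family cardinality factorizes
  have hfc : family.card = ∏ A ∈ pc, (Stmt9.Matchings (n := n) (k := k) r s A).card := by
    have h := Stmt9.card_factor r s hr1 (fun _ _ => True) family hfam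
    simpa using h
  have hfcR : (family.card : ℝ)
      = ∏ A ∈ pc, ((Stmt9.Matchings (n := n) (k := k) r s A).card : ℝ) := by
    rw [hfc]
    push_cast
    rfl
  -- per-transversal count
  have hcount : ∀ f : Fin n → Fin k,
      ((family.filter (fun H => ∀ e ∈ H,
          ¬ e ⊆ Finset.univ.image (fun i => (i, f i)))).card : ℝ)
        = (family.card : ℝ) * (1 - (s : ℝ) / (k : ℝ) ^ r) ^ Nat.choose n r := by
    intro f
    have hfac := Stmt9.card_factor r s hr1
      (fun _ m => ∀ e ∈ m, ¬ e ⊆ Stmt9.graphOf f) family hfam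
    have hfilter_eq : family.filter (fun H => ∀ A ∈ pc,
          ∀ e ∈ H.filter (fun e => ∀ v ∈ e, v.1 ∈ A), ¬ e ⊆ Stmt9.graphOf f)
        = family.filter (fun H => ∀ e ∈ H,
            ¬ e ⊆ Finset.univ.image (fun i => (i, f i))) := by
      apply Finset.filter_congr
      intro H hH
      rw [hfam, Finset.mem_filter] at hH
      obtain ⟨-, h1, h2, -⟩ := hH
      constructor
      · intro h e he
        have hA : e.image Prod.fst ∈ pc := Finset.mem_powersetCard.2
          ⟨Finset.subset_univ _, Stmt9.support_card (h1 e he) (h2 e he)⟩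
        have := h _ hA e
          (Finset.mem_filter.2 ⟨he, fun v hv => Finset.mem_image.2 ⟨v, hv, rfl⟩⟩)
        simpa [Stmt9.graphOf] using this
      · intro h A _ e he
        have := h e (Finset.mem_filter.1 he).1
        simpa [Stmt9.graphOf] using this
    calc ((family.filter (fun H => ∀ e ∈ H,
            ¬ e ⊆ Finset.univ.image (fun i => (i, f i)))).card : ℝ)
        = ((family.filter (fun H => ∀ A ∈ pc,
            ∀ e ∈ H.filter (fun e => ∀ v ∈ e, v.1 ∈ A),
              ¬ e ⊆ Stmt9.graphOf f)).card : ℝ) := by rw [hfilter_eq]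
      _ = ((∏ A ∈ pc, ((Stmt9.Matchings (n := n) (k := k) r s A).filter
            (fun m => ∀ e ∈ m, ¬ e ⊆ Stmt9.graphOf f)).card : ℕ) : ℝ) := by
            rw [hfac]
      _ = ∏ A ∈ pc, (((Stmt9.Matchings (n := n) (k := k) r s A).filter
            (fun m => ∀ e ∈ m, ¬ e ⊆ Stmt9.graphOf f)).card : ℝ) := by
            push_cast; rfl
      _ = ∏ A ∈ pc, ((Stmt9.Matchings (n := n) (k := k) r s A).card : ℝ)
            * (1 - (s : ℝ) / (k : ℝ) ^ r) := by
            refine Finset.prod_congr rfl (fun A hA => ?_)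
            exact Stmt9.avoid_count_real (Finset.mem_powersetCard.1 hA).2 hr1 hrn hk hsk f
      _ = (∏ A ∈ pc, ((Stmt9.Matchings (n := n) (k := k) r s A).card : ℝ))
            * (1 - (s : ℝ) / (k : ℝ) ^ r) ^ pc.card := by
            rw [Finset.prod_mul_distrib, Finset.prod_const]
      _ = (family.card : ℝ) * (1 - (s : ℝ) / (k : ℝ) ^ r) ^ Nat.choose n r := by
            rw [hpccard, hfcR]
  -- swap the two sums
  have hswap : ∑ H ∈ family, (Finset.univ.filter (fun f : Fin n → Fin k =>
        ∀ e ∈ H, ¬ e ⊆ Finset.univ.image (fun i => (i, f i)))).card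
      = ∑ f : Fin n → Fin k, (family.filter (fun H => ∀ e ∈ H,
          ¬ e ⊆ Finset.univ.image (fun i => (i, f i)))).card := by
    simp only [Finset.card_filter]
    exact Finset.sum_comm
  have hpart1 : (∑ H ∈ family, ((Finset.univ.filter (fun f : Fin n → Fin k =>
        ∀ e ∈ H, ¬ e ⊆ Finset.univ.image (fun i => (i, f i)))).card : ℝ))
      = (family.card : ℝ) * (k : ℝ) ^ n
        * (1 - (s : ℝ) / (k : ℝ) ^ r) ^ (Nat.choose n r) := by
    calc (∑ H ∈ family, ((Finset.univ.filter (fun f : Fin n → Fin k =>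
          ∀ e ∈ H, ¬ e ⊆ Finset.univ.image (fun i => (i, f i)))).card : ℝ))
        = ((∑ H ∈ family, (Finset.univ.filter (fun f : Fin n → Fin k =>
            ∀ e ∈ H, ¬ e ⊆ Finset.univ.image (fun i => (i, f i)))).card : ℕ) : ℝ) := by
          push_cast; rfl
      _ = ((∑ f : Fin n → Fin k, (family.filter (fun H => ∀ e ∈ H,
            ¬ e ⊆ Finset.univ.image (fun i => (i, f i)))).card : ℕ) : ℝ) := by
          rw [hswap]
      _ = ∑ f : Fin n → Fin k, ((family.filter (fun H => ∀ e ∈ H,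
            ¬ e ⊆ Finset.univ.image (fun i => (i, f i)))).card : ℝ) := by
          push_cast; rfl
      _ = ∑ _f : Fin n → Fin k,
            (family.card : ℝ) * (1 - (s : ℝ) / (k : ℝ) ^ r) ^ Nat.choose n r :=
          Finset.sum_congr rfl (fun f _ => hcount f)
      _ = (family.card : ℝ) * (k : ℝ) ^ n
            * (1 - (s : ℝ) / (k : ℝ) ^ r) ^ (Nat.choose n r) := by
          rw [Finset.sum_const, Finset.card_univ, Fintype.card_fun, Fintype.card_fin,
            Fintype.card_fin, nsmul_eq_mul]
          push_cast
          ring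
  refine ⟨hpart1, ?_⟩
  intro hlt
  by_contra hcon
  push_neg at hcon
  have hne : family.Nonempty := by
    rw [← Finset.card_pos, hfc]
    apply Finset.prod_pos
    intro A hA
    exact Finset.card_pos.2
      (Stmt9.matchings_nonempty (Finset.mem_powersetCard.1 hA).2 hr1 hsk)
  have hcpos : (0 : ℝ) < (family.card : ℝ) := by
    exact_mod_cast Finset.card_pos.2 hne
  have hge : (family.card : ℝ) ≤ ∑ H ∈ family, ((Finset.univ.filter (fun f : Fin n → Fin k =>
      ∀ e ∈ H, ¬ e ⊆ Finset.univ.image (fun i => (i, f i)))).card : ℝ) := by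
    calc (family.card : ℝ) = ∑ _H ∈ family, (1 : ℝ) := by
          rw [Finset.sum_const, nsmul_eq_mul, mul_one]
      _ ≤ _ := by
          refine Finset.sum_le_sum (fun H hH => ?_)
          obtain ⟨f, hf⟩ := hcon H hH
          have hmem : f ∈ Finset.univ.filter (fun f : Fin n → Fin k =>
              ∀ e ∈ H, ¬ e ⊆ Finset.univ.image (fun i => (i, f i))) :=
            Finset.mem_filter.2 ⟨Finset.mem_univ f, hf⟩
          have : 1 ≤ (Finset.univ.filter (fun f : Fin n → Fin k =>
              ∀ e ∈ H, ¬ e ⊆ Finset.univ.image (fun i => (i, f i)))).card :=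
            Finset.card_pos.2 ⟨f, hmem⟩
          exact_mod_cast this
  rw [hpart1] at hge
  have hlt2 : (family.card : ℝ) * ((k : ℝ) ^ n
      * (1 - (s : ℝ) / (k : ℝ) ^ r) ^ (Nat.choose n r)) < (family.card : ℝ) * 1 :=
    mul_lt_mul_of_pos_left hlt hcpos
  rw [mul_one] at hlt2
  nlinarith [hge, hlt2]
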